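/- Let S be a Steiner triple system of order 21 with a colouring whose colour classes A, B, C each have cardinality 7. If n denotes the number of blocks with two points in A and one point in B, then: the number of blocks with two points in B and one in C equals n, the number with two points in C and one in A equals n, the number with two points in A and one in C equals 21 − n, the number with two points in B and one in A equals 21 − n, the number with two points in C and one in B equals 21 − n, and the number of blocks with exactly one point in each of A, B and C equals 7. -/
import Mathlib


/-- A Steiner triple system on point set `points` with block set `blocks`:
every block is a 3-element subset of `points`, and every pair of distinct
points lies in exactly one block. -/
def IsSTS {α : Type*} [DecidableEq α] (points : Finset α) (blocks : Finset (Finset α)) : Prop :=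
  (∀ b ∈ blocks, b ⊆ points ∧ b.card = 3) ∧
  (∀ x ∈ points, ∀ y ∈ points, x ≠ y → ∃! b, b ∈ blocks ∧ x ∈ b ∧ y ∈ b)

/-- An `ℓ`-good sequencing: a permutation (listing) of the points such that no
`ℓ` consecutive entries contain a block. -/
def IsGoodSeq {α : Type*} [DecidableEq α] (points : Finset α) (blocks : Finset (Finset α))
    (ℓ : ℕ) (L : List α) : Prop :=
  L.Nodup ∧ L.toFinset = points ∧
  ∀ i : ℕ, ∀ b ∈ blocks, ¬ b ⊆ ((L.drop i).take ℓ).toFinset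

/-- A cyclic `ℓ`-good sequencing: a permutation (listing) of the points such that no
`ℓ` cyclically consecutive entries contain a block. -/
def IsCyclicGoodSeq {α : Type*} [DecidableEq α] (points : Finset α) (blocks : Finset (Finset α))
    (ℓ : ℕ) (L : List α) : Prop :=
  L.Nodup ∧ L.toFinset = points ∧
  ∀ i : ℕ, ∀ b ∈ blocks, ¬ b ⊆ (((L ++ L).drop i).take ℓ).toFinset

/-- An independent set: a set of points containing no block. -/
def IsIndep {α : Type*} [DecidableEq α] (blocks : Finset (Finset α)) (I : Finset α) : Prop :=
  ∀ b ∈ blocks, ¬ b ⊆ I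

/-- A (proper) colouring with colour set `Fin k`: no block is monochromatic,
i.e. every colour class is an independent set. -/
def IsColouring {α : Type*} [DecidableEq α] (blocks : Finset (Finset α)) {k : ℕ}
    (χ : α → Fin k) : Prop :=
  ∀ b ∈ blocks, ∃ x ∈ b, ∃ y ∈ b, χ x ≠ χ y

/-- A colouring with three explicitly given colour classes `A`, `B`, `C`:
they partition the point set and each is independent. -/
def IsColouring3 {α : Type*} [DecidableEq α] (points : Finset α) (blocks : Finset (Finset α))
    (A B C : Finset α) : Prop :=
  A ∪ B ∪ C = points ∧ Disjoint A B ∧ Disjoint A C ∧ Disjoint B C ∧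
  IsIndep blocks A ∧ IsIndep blocks B ∧ IsIndep blocks C

-- double count within a set
lemma sts_offDiag {α : Type*} [DecidableEq α] {points : Finset α} {blocks : Finset (Finset α)}
    (hS : IsSTS points blocks) {S : Finset α} (hs : S ⊆ points) :
    S.card * S.card - S.card = ∑ b ∈ blocks, ((b ∩ S).card * (b ∩ S).card - (b ∩ S).card) := by
  obtain ⟨hb3, huniq⟩ := hS
  have hunion : S.offDiag = blocks.biUnion fun b => (b ∩ S).offDiag := by
    ext ⟨x, y⟩
    simp only [Finset.mem_offDiag, Finset.mem_biUnion, Finset.mem_inter]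
    constructor
    · rintro ⟨hx, hy, hxy⟩
      obtain ⟨b, ⟨hb, hxb, hyb⟩, -⟩ := huniq x (hs hx) y (hs hy) hxy
      exact ⟨b, hb, ⟨hxb, hx⟩, ⟨hyb, hy⟩, hxy⟩
    · rintro ⟨b, hb, ⟨-, hx⟩, ⟨-, hy⟩, hxy⟩
      exact ⟨hx, hy, hxy⟩
  have hdisj : (blocks : Set (Finset α)).PairwiseDisjoint fun b => (b ∩ S).offDiag := by
    intro b hb b' hb' hne
    simp only [Finset.disjoint_left]
    rintro ⟨x, y⟩ hxy hxy'
    simp only [Finset.mem_offDiag, Finset.mem_inter] at hxy hxy'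
    obtain ⟨⟨hxb, hxS⟩, ⟨hyb, hyS⟩, hne2⟩ := hxy
    obtain ⟨⟨hxb', -⟩, ⟨hyb', -⟩, -⟩ := hxy'
    obtain ⟨c, -, hcuniq⟩ := huniq x (hs hxS) y (hs hyS) hne2
    exact hne ((hcuniq b ⟨hb, hxb, hyb⟩).trans (hcuniq b' ⟨hb', hxb', hyb'⟩).symm)
  have := congrArg Finset.card hunion
  rw [Finset.card_biUnion hdisj] at this
  simpa [Finset.offDiag_card] using this

-- double count between two disjoint sets
lemma sts_cross {α : Type*} [DecidableEq α] {points : Finset α} {blocks : Finset (Finset α)}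
    (hS : IsSTS points blocks) {S T : Finset α} (hs : S ⊆ points) (ht : T ⊆ points)
    (hd : Disjoint S T) :
    S.card * T.card = ∑ b ∈ blocks, ((b ∩ S).card * (b ∩ T).card) := by
  obtain ⟨hb3, huniq⟩ := hS
  have hunion : S ×ˢ T = blocks.biUnion fun b => (b ∩ S) ×ˢ (b ∩ T) := by
    ext ⟨x, y⟩
    simp only [Finset.mem_product, Finset.mem_biUnion, Finset.mem_inter]
    constructor
    · rintro ⟨hx, hy⟩
      have hxy : x ≠ y := fun h => (Finset.disjoint_left.mp hd hx) (h ▸ hy)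
      obtain ⟨b, ⟨hb, hxb, hyb⟩, -⟩ := huniq x (hs hx) y (ht hy) hxy
      exact ⟨b, hb, ⟨hxb, hx⟩, ⟨hyb, hy⟩⟩
    · rintro ⟨b, hb, ⟨-, hx⟩, ⟨-, hy⟩⟩
      exact ⟨hx, hy⟩
  have hdisj : (blocks : Set (Finset α)).PairwiseDisjoint fun b => (b ∩ S) ×ˢ (b ∩ T) := by
    intro b hb b' hb' hne
    simp only [Finset.disjoint_left]
    rintro ⟨x, y⟩ hxy hxy'
    simp only [Finset.mem_product, Finset.mem_inter] at hxy hxy'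
    obtain ⟨⟨hxb, hxS⟩, hyb, hyT⟩ := hxy
    obtain ⟨⟨hxb', -⟩, hyb', -⟩ := hxy'
    have hne2 : x ≠ y := fun h => (Finset.disjoint_left.mp hd hxS) (h ▸ hyT)
    obtain ⟨c, -, hcuniq⟩ := huniq x (hs hxS) y (ht hyT) hne2
    exact hne ((hcuniq b ⟨hb, hxb, hyb⟩).trans (hcuniq b' ⟨hb', hxb', hyb'⟩).symm)
  have := congrArg Finset.card hunion
  rw [Finset.card_biUnion hdisj] at this
  simpa using this

lemma ptwise1 (x y z : ℕ) (h1 : x+y+z=3) (h2 : x≤2) (h3 : y≤2) (h4 : z≤2) :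
    x*x - x = 2*(if x=2∧y=1 then 1 else 0) + 2*(if x=2∧z=1 then 1 else 0) := by
  interval_cases x <;> interval_cases y <;> split_ifs <;> first | tauto | omega

lemma ptwise2 (x y z : ℕ) (h1 : x+y+z=3) (h2 : x≤2) (h3 : y≤2) (h4 : z≤2) :
    x*y = 2*(if x=2∧y=1 then 1 else 0) + 2*(if y=2∧x=1 then 1 else 0)
        + (if x=1∧y=1∧z=1 then 1 else 0) := by
  interval_cases x <;> interval_cases y <;> split_ifs <;> first | tauto | omega

theorem stmt13 {α : Type*} [DecidableEq α] (points : Finset α) (blocks : Finset (Finset α))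
    (hS : IsSTS points blocks) (hv : points.card = 21)
    (A B C : Finset α) (hcol : IsColouring3 points blocks A B C)
    (hA : A.card = 7) (hB : B.card = 7) (hC : C.card = 7)
    (n : ℕ)
    (hn : n = (blocks.filter (fun b => (b ∩ A).card = 2 ∧ (b ∩ B).card = 1)).card) :
    ((blocks.filter (fun b => (b ∩ B).card = 2 ∧ (b ∩ C).card = 1)).card = n) ∧
    ((blocks.filter (fun b => (b ∩ C).card = 2 ∧ (b ∩ A).card = 1)).card = n) ∧
    (((blocks.filter (fun b => (b ∩ A).card = 2 ∧ (b ∩ C).card = 1)).card : ℤ) = 21 - n) ∧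
    (((blocks.filter (fun b => (b ∩ B).card = 2 ∧ (b ∩ A).card = 1)).card : ℤ) = 21 - n) ∧
    (((blocks.filter (fun b => (b ∩ C).card = 2 ∧ (b ∩ B).card = 1)).card : ℤ) = 21 - n) ∧
    ((blocks.filter (fun b =>
        (b ∩ A).card = 1 ∧ (b ∩ B).card = 1 ∧ (b ∩ C).card = 1)).card = 7) := by
  obtain ⟨hun, hdAB, hdAC, hdBC, hiA, hiB, hiC⟩ := hcol
  obtain ⟨hb3, huniq⟩ := hS
  have hAp : A ⊆ points := hun ▸ (Finset.subset_union_left.trans Finset.subset_union_left)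
  have hBp : B ⊆ points := hun ▸ (Finset.subset_union_right.trans Finset.subset_union_left)
  have hCp : C ⊆ points := hun ▸ Finset.subset_union_right
  -- per-block structure
  have hblk : ∀ b ∈ blocks, (b ∩ A).card + (b ∩ B).card + (b ∩ C).card = 3 ∧
      (b ∩ A).card ≤ 2 ∧ (b ∩ B).card ≤ 2 ∧ (b ∩ C).card ≤ 2 := by
    intro b hb
    obtain ⟨hbp, hb3'⟩ := hb3 b hb
    have hsum : (b ∩ A).card + (b ∩ B).card + (b ∩ C).card = 3 := by
      have h1 : (b ∩ A) ∪ (b ∩ B) ∪ (b ∩ C) = b := by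
        rw [← Finset.inter_union_distrib_left, ← Finset.inter_union_distrib_left, hun]
        exact Finset.inter_eq_left.mpr hbp
      have d1 : Disjoint (b ∩ A) (b ∩ B) :=
        (hdAB.mono Finset.inter_subset_right Finset.inter_subset_right)
      have d2 : Disjoint ((b ∩ A) ∪ (b ∩ B)) (b ∩ C) :=
        Finset.disjoint_union_left.mpr
          ⟨hdAC.mono Finset.inter_subset_right Finset.inter_subset_right,
           hdBC.mono Finset.inter_subset_right Finset.inter_subset_right⟩
      have hc := congrArg Finset.card h1
      rw [Finset.card_union_of_disjoint d2, Finset.card_union_of_disjoint d1] at hc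
      omega
    have key : ∀ (X : Finset α), IsIndep blocks X → (b ∩ X).card ≤ 2 := by
      intro X hX
      by_contra h
      have h3 : (b ∩ X).card = 3 := le_antisymm
        (hb3' ▸ Finset.card_le_card Finset.inter_subset_left) (by omega)
      have : b ∩ X = b := Finset.eq_of_subset_of_card_le Finset.inter_subset_left (by omega)
      exact hX b hb (by rw [← this]; exact Finset.inter_subset_right)
    exact ⟨hsum, key A hiA, key B hiB, key C hiC⟩
  -- the six counting equations
  have eqAA := sts_offDiag ⟨hb3, huniq⟩ hAp
  have eqBB := sts_offDiag ⟨hb3, huniq⟩ hBp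
  have eqCC := sts_offDiag ⟨hb3, huniq⟩ hCp
  have eqAB := sts_cross ⟨hb3, huniq⟩ hAp hBp hdAB
  have eqBC := sts_cross ⟨hb3, huniq⟩ hBp hCp hdBC
  have eqAC := sts_cross ⟨hb3, huniq⟩ hAp hCp hdAC
  rw [hA] at eqAA eqAB eqAC
  rw [hB] at eqBB eqAB eqBC
  rw [hC] at eqCC eqBC eqAC
  -- rewrite summands as indicators of the filter classes
  have conv2 : ∀ (X Y Z : Finset α), Disjoint X Y → Disjoint X Z → Disjoint Y Z →
      (∀ b ∈ blocks, (b ∩ X).card + (b ∩ Y).card + (b ∩ Z).card = 3 ∧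
        (b ∩ X).card ≤ 2 ∧ (b ∩ Y).card ≤ 2 ∧ (b ∩ Z).card ≤ 2) →
      (∑ b ∈ blocks, ((b ∩ X).card * (b ∩ X).card - (b ∩ X).card))
        = 2 * (blocks.filter (fun b => (b ∩ X).card = 2 ∧ (b ∩ Y).card = 1)).card
        + 2 * (blocks.filter (fun b => (b ∩ X).card = 2 ∧ (b ∩ Z).card = 1)).card := by
    intro X Y Z _ _ _ hblk'
    rw [Finset.card_filter, Finset.card_filter, Finset.mul_sum, Finset.mul_sum,
      ← Finset.sum_add_distrib]
    apply Finset.sum_congr rfl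
    intro b hb
    obtain ⟨h1, h2, h3, h4⟩ := hblk' b hb
    exact ptwise1 _ _ _ h1 h2 h3 h4
  have conv3 : ∀ (X Y Z : Finset α),
      (∀ b ∈ blocks, (b ∩ X).card + (b ∩ Y).card + (b ∩ Z).card = 3 ∧
        (b ∩ X).card ≤ 2 ∧ (b ∩ Y).card ≤ 2 ∧ (b ∩ Z).card ≤ 2) →
      (∑ b ∈ blocks, ((b ∩ X).card * (b ∩ Y).card))
        = 2 * (blocks.filter (fun b => (b ∩ X).card = 2 ∧ (b ∩ Y).card = 1)).card
        + 2 * (blocks.filter (fun b => (b ∩ Y).card = 2 ∧ (b ∩ X).card = 1)).card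
        + (blocks.filter (fun b =>
            (b ∩ X).card = 1 ∧ (b ∩ Y).card = 1 ∧ (b ∩ Z).card = 1)).card := by
    intro X Y Z hblk'
    rw [Finset.card_filter, Finset.card_filter, Finset.card_filter, Finset.mul_sum,
      Finset.mul_sum, ← Finset.sum_add_distrib, ← Finset.sum_add_distrib]
    apply Finset.sum_congr rfl
    intro b hb
    obtain ⟨h1, h2, h3, h4⟩ := hblk' b hb
    exact ptwise2 _ _ _ h1 h2 h3 h4
  have hblkB : ∀ b ∈ blocks, (b ∩ B).card + (b ∩ C).card + (b ∩ A).card = 3 ∧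
      (b ∩ B).card ≤ 2 ∧ (b ∩ C).card ≤ 2 ∧ (b ∩ A).card ≤ 2 := by
    intro b hb; obtain ⟨h1, h2, h3, h4⟩ := hblk b hb; exact ⟨by omega, h3, h4, h2⟩
  have hblkC : ∀ b ∈ blocks, (b ∩ C).card + (b ∩ A).card + (b ∩ B).card = 3 ∧
      (b ∩ C).card ≤ 2 ∧ (b ∩ A).card ≤ 2 ∧ (b ∩ B).card ≤ 2 := by
    intro b hb; obtain ⟨h1, h2, h3, h4⟩ := hblk b hb; exact ⟨by omega, h4, h2, h3⟩
  rw [conv2 A B C hdAB hdAC hdBC hblk] at eqAA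
  rw [conv2 B C A hdBC hdAB.symm hdAC.symm hblkB] at eqBB
  rw [conv2 C A B hdAC.symm hdBC.symm hdAB hblkC] at eqCC
  rw [conv3 A B C hblk] at eqAB
  rw [conv3 B C A hblkB] at eqBC
  rw [conv3 A C B (fun b hb => by obtain ⟨h1, h2, h3, h4⟩ := hblk b hb; exact ⟨by omega, h2, h4, h3⟩)] at eqAC
  have hp1 : blocks.filter (fun b => (b ∩ B).card = 1 ∧ (b ∩ C).card = 1 ∧ (b ∩ A).card = 1)
      = blocks.filter (fun b => (b ∩ A).card = 1 ∧ (b ∩ B).card = 1 ∧ (b ∩ C).card = 1) :=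
    Finset.filter_congr (fun b _ => by tauto)
  have hp2 : blocks.filter (fun b => (b ∩ A).card = 1 ∧ (b ∩ C).card = 1 ∧ (b ∩ B).card = 1)
      = blocks.filter (fun b => (b ∩ A).card = 1 ∧ (b ∩ B).card = 1 ∧ (b ∩ C).card = 1) :=
    Finset.filter_congr (fun b _ => by tauto)
  rw [hp1] at eqBC
  rw [hp2] at eqAC
  -- now pure arithmetic
  refine ⟨by omega, by omega, ?_, ?_, ?_, by omega⟩ <;>
  · have : n ≤ 21 := by omega
    push_cast
    omega
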